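/- For the logistic map sequence defined by x_{k+1} = a·x_k·(1 − x_k) with parameter a = 3.71 and initial value x_0 = 1/2^n, where n is a positive integer, there exists an integer m with 0 ≤ m ≤ 2n such that x_m > 1/2. -/
import Mathlib


/-- For the logistic map sequence `x_{k+1} = 3.71 * x_k * (1 - x_k)` with initial value
`x_0 = 1/2^n` (`n` a positive integer), there exists `m` with `0 ≤ m ≤ 2n` and `x_m > 1/2`. -/
theorem logistic_map_amplification (n : ℕ) (hn : 0 < n) (x : ℕ → ℝ)
    (h0 : x 0 = 1 / 2 ^ n)
    (hrec : ∀ k, x (k + 1) = 3.71 * x k * (1 - x k)) :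
    ∃ m : ℕ, m ≤ 2 * n ∧ x m > 1 / 2 := by
  by_contra hcon
  push_neg at hcon
  have key : ∀ k, k ≤ 2 * n → (1.855 : ℝ) ^ k * (1 / 2 ^ n) ≤ x k := by
    intro k
    induction k with
    | zero => intro _; simp [h0]
    | succ k ih =>
      intro hk
      have hk' : k ≤ 2 * n := Nat.le_of_succ_le hk
      have hxk := ih hk'
      have hle : x k ≤ 1 / 2 := hcon k hk'
      have hpos : (0 : ℝ) < 1.855 ^ k * (1 / 2 ^ n) := by positivity
      have hxpos : 0 < x k := lt_of_lt_of_le hpos hxk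
      have hstep : 1.855 * x k ≤ x (k + 1) := by
        rw [hrec k]; nlinarith
      calc (1.855 : ℝ) ^ (k + 1) * (1 / 2 ^ n)
          = 1.855 * (1.855 ^ k * (1 / 2 ^ n)) := by ring
        _ ≤ 1.855 * x k := by nlinarith
        _ ≤ x (k + 1) := hstep
  have h2n := key (2 * n) le_rfl
  have hle := hcon (2 * n) le_rfl
  have hpow : (2 : ℝ) ^ n ≤ 1.855 ^ (2 * n) := by
    rw [pow_mul]
    apply pow_le_pow_left₀ (by norm_num)
    norm_num
  have hpos : (0 : ℝ) < 2 ^ n := by positivity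
  have : (1 : ℝ) ≤ 1.855 ^ (2 * n) * (1 / 2 ^ n) := by
    rw [mul_one_div, le_div_iff₀ hpos, one_mul]
    exact hpow
  linarith
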